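/- Let n ∈ ℕ, n ≥ 1, set ñ = 4n−1, let F be the ñ×ñ unitary DFT matrix, and let 𝒮_z' : ℂ^n → ℂ^{ñ} be defined by 𝒮_z'(x) = (0_n, x_0, …, x_{n−1}, conj(x_{n−1}), …, conj(x_0), 0_{n−1}). Then for all x₁, x₂ ∈ ℂ^n, if |F 𝒮_z'(x₁)|² = |F 𝒮_z'(x₂)|² (componentwise), then x₁ = x₂ or x₁ = −x₂. -/

import Mathlib

open scoped BigOperators

/-- Circular convolution on `ℂ^m`: `(u ⊛ v)_k = ∑_l u_l v_{(k-l) mod m}`. -/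
noncomputable def cconv {m : ℕ} (u v : Fin m → ℂ) : Fin m → ℂ :=
  fun k => ∑ l : Fin m, u l * v (k - l)

/-- Circular correlation on `ℂ^m`: `(u ⋆ v)_k = ∑_l u_l conj (v_{(k+l) mod m})`. -/
noncomputable def ccorr {m : ℕ} (u v : Fin m → ℂ) : Fin m → ℂ :=
  fun k => ∑ l : Fin m, u l * (starRingEnd ℂ) (v (k + l))

/-- Euclidean (ℓ²) norm of a vector. -/
noncomputable def euclNorm {m : ℕ} {E : Type*} [SeminormedAddGroup E] (x : Fin m → E) : ℝ :=
  Real.sqrt (∑ i, ‖x i‖ ^ 2)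

/-- Zero padding `ℂ^n → ℂ^m` (entries of `x` followed by zeros). -/
def pad (n m : ℕ) (x : Fin n → ℂ) : Fin m → ℂ :=
  fun k => if h : (k : ℕ) < n then x ⟨k, h⟩ else 0

/-- `x` has at most `s` nonzero entries. -/
def sparse {n : ℕ} (s : ℕ) (x : Fin n → ℂ) : Prop :=
  Set.ncard {i | x i ≠ 0} ≤ s

/-- The unitary DFT matrix `F_{kl} = m^{-1/2} exp(2πi kl/m)`. -/
noncomputable def dft (m : ℕ) : Matrix (Fin m) (Fin m) ℂ :=
  fun k l => ((Real.sqrt m : ℝ) : ℂ)⁻¹ *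
    Complex.exp (2 * (Real.pi : ℂ) * Complex.I * ((k : ℕ) : ℂ) * ((l : ℕ) : ℂ) / (m : ℂ))

/-- Cyclic shift: `(S x)_k = x_{(k-1) mod m}`. -/
def shiftOp {m : ℕ} (x : Fin m → ℂ) : Fin m → ℂ :=
  fun k => x ⟨((k : ℕ) + (m - 1)) % m, Nat.mod_lt _ (by have := k.isLt; omega)⟩

/-- Time reversal: `(Γ x)_k = x_{(-k) mod m}`. -/
def rev {m : ℕ} (u : Fin m → ℂ) : Fin m → ℂ := fun k => u (-k)

/-- Symmetrization `𝒮 : ℂ^n → ℂ^{2n-1}`,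
`𝒮(x) = (x_0, …, x_{n-1}, conj x_{n-1}, …, conj x_1)`. -/
noncomputable def symmetrize (n : ℕ) (x : Fin n → ℂ) : Fin (2 * n - 1) → ℂ :=
  fun k =>
    if h : (k : ℕ) < n then x ⟨k, h⟩
    else (starRingEnd ℂ) (x ⟨2 * n - 1 - (k : ℕ), by have := k.isLt; omega⟩)

/-- Zero-padded symmetrization `𝒮_z : ℂ^n → ℂ^{4n-3}`, `𝒮_z(x) = 𝒮((x, 0_{n-1}))`. -/
noncomputable def symmetrizeZ (n : ℕ) (x : Fin n → ℂ) : Fin (4 * n - 3) → ℂ :=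
  fun k => symmetrize (2 * n - 1) (pad n (2 * n - 1) x) ⟨(k : ℕ), by have := k.isLt; omega⟩

/-- `𝒮_z' : ℂ^n → ℂ^{4n-1}`,
`𝒮_z'(x) = (0_n, x_0, …, x_{n-1}, conj x_{n-1}, …, conj x_0, 0_{n-1})`. -/
noncomputable def symmetrizeZ' (n : ℕ) (x : Fin n → ℂ) : Fin (4 * n - 1) → ℂ :=
  fun k =>
    if _ : (k : ℕ) < n then 0
    else if h2 : (k : ℕ) < 2 * n then x ⟨(k : ℕ) - n, by omega⟩
    else if h3 : (k : ℕ) < 3 * n then (starRingEnd ℂ) (x ⟨3 * n - 1 - (k : ℕ), by omega⟩)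
    else 0

open Polynomial Complex Finset

noncomputable def symPoly (n : ℕ) (x : Fin n → ℂ) : Polynomial ℂ :=
  (∑ j : Fin n, Polynomial.C (x j) * Polynomial.X ^ (j : ℕ))
  + ∑ j : Fin n, Polynomial.C ((starRingEnd ℂ) (x j)) * Polynomial.X ^ (2 * n - 1 - (j : ℕ))

lemma symPoly_coeff {n : ℕ} (x : Fin n → ℂ) (j : Fin n) :
    (symPoly n x).coeff (j : ℕ) = x j := by
  have hj := j.isLt
  simp only [symPoly, coeff_add, finset_sum_coeff, coeff_C_mul, coeff_X_pow,
    mul_ite, mul_one, mul_zero]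
  have h2 : (∑ i : Fin n, if (j : ℕ) = 2 * n - 1 - (i : ℕ) then (starRingEnd ℂ) (x i) else 0)
      = 0 := Finset.sum_eq_zero (fun i _ => by have := i.isLt; rw [if_neg]; omega)
  rw [h2, add_zero]
  simp only [Fin.val_eq_val, Finset.sum_ite_eq, Finset.mem_univ, if_true]

lemma symPoly_natDegree {n : ℕ} (hn : 0 < n) (x : Fin n → ℂ) :
    (symPoly n x).natDegree ≤ 2 * n - 1 := by
  apply Polynomial.natDegree_add_le_of_degree_le <;>
  · apply Polynomial.natDegree_sum_le_of_forall_le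
    intro i _
    apply le_trans (Polynomial.natDegree_C_mul_X_pow_le _ _)
    have := i.isLt
    omega

lemma symPoly_palindrome {n : ℕ} (hn : 0 < n) (x : Fin n → ℂ) {ζ : ℂ}
    (hζ : (starRingEnd ℂ) ζ * ζ = 1) :
    (starRingEnd ℂ) ((symPoly n x).eval ζ) * ζ ^ (2 * n - 1) = (symPoly n x).eval ζ := by
  have key : ∀ j : ℕ, j ≤ 2 * n - 1 →
      (starRingEnd ℂ) ζ ^ j * ζ ^ (2 * n - 1) = ζ ^ (2 * n - 1 - j) := by
    intro j hj
    rw [show ζ ^ (2 * n - 1) = ζ ^ j * ζ ^ (2 * n - 1 - j) by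
        rw [← pow_add]; congr 1; omega,
      ← mul_assoc, ← mul_pow, hζ, one_pow, one_mul]
  simp only [symPoly, eval_add, eval_finset_sum, eval_mul, eval_C, eval_pow, eval_X,
    map_add, map_sum, map_mul, map_pow, RingHomCompTriple.comp_apply, RingHom.id_apply,
    starRingEnd_self_apply]
  rw [add_mul, Finset.sum_mul, Finset.sum_mul, add_comm]
  congr 1
  · apply Finset.sum_congr rfl
    intro i _
    have hi := i.isLt
    rw [mul_assoc, key _ (by omega)]
    congr 2
    omega
  · apply Finset.sum_congr rfl
    intro i _
    have hi := i.isLt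
    rw [mul_assoc, key _ (by omega)]

lemma sum_symmetrizeZ' {n : ℕ} (hn : 0 < n) (x : Fin n → ℂ) (g : ℕ → ℂ) :
    ∑ l : Fin (4 * n - 1), g (l : ℕ) * symmetrizeZ' n x l
    = (∑ j : Fin n, g (n + (j : ℕ)) * x j)
      + ∑ j : Fin n, g (2 * n + (j : ℕ)) * (starRingEnd ℂ) (x ⟨n - 1 - (j : ℕ), by omega⟩) := by
  set Y : ℕ → ℂ := fun l => if h : l < 4 * n - 1 then symmetrizeZ' n x ⟨l, h⟩ else 0 with hY
  have hfin : ∀ l : Fin (4 * n - 1), Y (l : ℕ) = symmetrizeZ' n x l := by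
    intro l; simp [hY, l.isLt]
  calc ∑ l : Fin (4 * n - 1), g (l : ℕ) * symmetrizeZ' n x l
      = ∑ l ∈ Finset.range (4 * n - 1), g l * Y l := by
        rw [← Fin.sum_univ_eq_sum_range (fun l => g l * Y l)]
        exact Finset.sum_congr rfl (fun l _ => by rw [hfin])
    _ = ∑ l ∈ Finset.Ico n (3 * n), g l * Y l := by
        refine (Finset.sum_subset ?_ ?_).symm
        · intro l hl
          simp only [Finset.mem_Ico] at hl
          simp only [Finset.mem_range]
          omega
        · intro l hl hl'
          simp only [Finset.mem_range] at hl
          simp only [Finset.mem_Ico, not_and, not_lt] at hl'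
          have : Y l = 0 := by
            by_cases h1 : l < n
            · simp [hY, symmetrizeZ', h1, (by omega : l < 4 * n - 1)]
            · have h3 : ¬ l < 3 * n := by omega
              simp only [hY, symmetrizeZ', dif_pos hl]
              rw [dif_neg h1, dif_neg (by omega), dif_neg h3]
          rw [this, mul_zero]
    _ = (∑ l ∈ Finset.Ico n (2 * n), g l * Y l) + ∑ l ∈ Finset.Ico (2 * n) (3 * n), g l * Y l := by
        rw [Finset.sum_Ico_consecutive] <;> omega
    _ = _ := by
        congr 1
        · rw [Finset.sum_Ico_eq_sum_range, ← Fin.sum_univ_eq_sum_range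
            (fun j => g (n + j) * Y (n + j)), show 2 * n - n = n by omega]
          refine Finset.sum_congr rfl (fun j _ => ?_)
          have hj := j.isLt
          have : Y (n + (j : ℕ)) = x j := by
            simp only [hY, symmetrizeZ', dif_pos (by omega : n + (j : ℕ) < 4 * n - 1)]
            rw [dif_neg (by omega), dif_pos (by omega)]
            congr 1
            apply Fin.ext
            simp
          rw [this]
        · rw [Finset.sum_Ico_eq_sum_range, ← Fin.sum_univ_eq_sum_range
            (fun j => g (2 * n + j) * Y (2 * n + j)), show 3 * n - 2 * n = n by omega]
          refine Finset.sum_congr rfl (fun j _ => ?_)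
          have hj := j.isLt
          have : Y (2 * n + (j : ℕ)) = (starRingEnd ℂ) (x ⟨n - 1 - (j : ℕ), by omega⟩) := by
            simp only [hY, symmetrizeZ', dif_pos (by omega : 2 * n + (j : ℕ) < 4 * n - 1)]
            rw [dif_neg (by omega), dif_neg (by omega), dif_pos (by omega)]
            congr 1
            congr 1
            apply Fin.ext
            simp only []
            omega
          rw [this]

lemma dft_mulVec_symmetrizeZ' {n : ℕ} (hn : 0 < n) (x : Fin n → ℂ) (k : Fin (4 * n - 1)) :
    (dft (4 * n - 1)).mulVec (symmetrizeZ' n x) k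
    = ((Real.sqrt ((4 * n - 1 : ℕ) : ℝ) : ℝ) : ℂ)⁻¹ *
      (Complex.exp (2 * (Real.pi : ℂ) * Complex.I * ((k : ℕ) : ℂ) /
          (((4 * n - 1 : ℕ) : ℂ))) ^ n *
        (symPoly n x).eval
          (Complex.exp (2 * (Real.pi : ℂ) * Complex.I * ((k : ℕ) : ℂ) /
            (((4 * n - 1 : ℕ) : ℂ))))) := by
  set M : ℂ := ((4 * n - 1 : ℕ) : ℂ) with hM
  set ζ : ℂ := Complex.exp (2 * (Real.pi : ℂ) * Complex.I * ((k : ℕ) : ℂ) / M) with hζ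
  have hζl : ∀ l : ℕ, ζ ^ l = Complex.exp
      (2 * (Real.pi : ℂ) * Complex.I * ((k : ℕ) : ℂ) * (l : ℂ) / M) := by
    intro l
    rw [hζ, ← Complex.exp_nat_mul]
    congr 1
    ring
  have step1 : (dft (4 * n - 1)).mulVec (symmetrizeZ' n x) k
      = ((Real.sqrt ((4 * n - 1 : ℕ) : ℝ) : ℝ) : ℂ)⁻¹ *
        ∑ l : Fin (4 * n - 1), ζ ^ (l : ℕ) * symmetrizeZ' n x l := by
    rw [Matrix.mulVec, dotProduct, Finset.mul_sum]
    refine Finset.sum_congr rfl (fun l _ => ?_)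
    rw [dft, hζl]
    ring
  rw [step1, sum_symmetrizeZ' hn x (fun t => ζ ^ t)]
  congr 1
  have e1 : (∑ j : Fin n, ζ ^ (n + (j : ℕ)) * x j)
      = ζ ^ n * ∑ j : Fin n, x j * ζ ^ (j : ℕ) := by
    rw [Finset.mul_sum]
    exact Finset.sum_congr rfl (fun j _ => by rw [pow_add]; ring)
  have e2 : (∑ j : Fin n, ζ ^ (2 * n + (j : ℕ)) *
        (starRingEnd ℂ) (x ⟨n - 1 - (j : ℕ), by omega⟩))
      = ζ ^ n * ∑ j : Fin n, (starRingEnd ℂ) (x j) * ζ ^ (2 * n - 1 - (j : ℕ)) := by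
    rw [Finset.mul_sum]
    refine Fintype.sum_equiv Fin.revPerm _ _ (fun j => ?_)
    have hj := j.isLt
    have hrev : (Fin.revPerm j : Fin n) = ⟨n - 1 - (j : ℕ), by omega⟩ := by
      apply Fin.ext
      simp [Fin.val_rev]
      omega
    rw [hrev]
    have hexp : 2 * n - 1 - ((⟨n - 1 - (j : ℕ), by omega⟩ : Fin n) : ℕ) = n + (j : ℕ) := by
      simp only []
      omega
    rw [hexp, show 2 * n + (j : ℕ) = n + (n + (j : ℕ)) by omega, pow_add]
    ring
  rw [e1, e2, symPoly]
  simp only [eval_add, eval_finset_sum, eval_mul, eval_C, eval_pow, eval_X]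
  ring

/-- Injectivity up to global sign of the `4n-1` magnitude Fourier measurements
of `𝒮_z'`. -/
theorem injectivity_symmetrizeZ_prime (n : ℕ) (hn : 0 < n) (x₁ x₂ : Fin n → ℂ)
    (h : ∀ k, ‖(dft (4 * n - 1)).mulVec (symmetrizeZ' n x₁) k‖ ^ 2 =
      ‖(dft (4 * n - 1)).mulVec (symmetrizeZ' n x₂) k‖ ^ 2) :
    x₁ = x₂ ∨ x₁ = -x₂ := by
  have hm : (4 * n - 1 : ℕ) ≠ 0 := by omega
  set M : ℂ := ((4 * n - 1 : ℕ) : ℂ) with hMdef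
  have hM0 : M ≠ 0 := by
    rw [hMdef]
    exact_mod_cast Nat.cast_ne_zero.mpr hm
  set c : ℂ := ((Real.sqrt ((4 * n - 1 : ℕ) : ℝ) : ℝ) : ℂ)⁻¹ with hcdef
  have hcc : (starRingEnd ℂ) c = c := by
    rw [hcdef, map_inv₀, Complex.conj_ofReal]
  have hc2 : c * c = M⁻¹ := by
    rw [hcdef, ← mul_inv, hMdef, ← Complex.ofReal_mul,
      Real.mul_self_sqrt (by positivity), Complex.ofReal_natCast]
  have hprim := Complex.isPrimitiveRoot_exp (4 * n - 1) hm
  set ω : ℂ := Complex.exp (2 * (Real.pi : ℂ) * Complex.I / ((4 * n - 1 : ℕ) : ℂ)) with hω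
  have hpow : ∀ k : Fin (4 * n - 1),
      Complex.exp (2 * (Real.pi : ℂ) * Complex.I * ((k : ℕ) : ℂ) / (((4 * n - 1 : ℕ) : ℂ)))
        = ω ^ (k : ℕ) := by
    intro k
    rw [hω, ← Complex.exp_nat_mul]
    congr 1
    ring
  have hωu : (starRingEnd ℂ) ω * ω = 1 := by
    rw [hω, ← Complex.exp_conj, ← Complex.exp_add, ← Complex.exp_zero]
    congr 1
    have : (starRingEnd ℂ) (2 * (Real.pi : ℂ) * Complex.I / ((4 * n - 1 : ℕ) : ℂ))
        = -(2 * (Real.pi : ℂ) * Complex.I / ((4 * n - 1 : ℕ) : ℂ)) := by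
      simp only [map_div₀, map_mul, Complex.conj_I, Complex.conj_ofReal, map_ofNat,
        map_natCast]
      ring
    rw [this]
    ring
  have habs : ∀ z : ℂ, ((‖z‖ ^ 2 : ℝ) : ℂ) = z * (starRingEnd ℂ) z := fun z => by
    rw [Complex.mul_conj, Complex.sq_norm]
  have key : ∀ k : Fin (4 * n - 1),
      ((symPoly n x₁).eval (ω ^ (k : ℕ))) ^ 2 = ((symPoly n x₂).eval (ω ^ (k : ℕ))) ^ 2 := by
    intro k
    set ζ : ℂ := ω ^ (k : ℕ) with hζ
    have hζu : (starRingEnd ℂ) ζ * ζ = 1 := by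
      rw [hζ, map_pow, ← mul_pow, hωu, one_pow]
    set A₁ : ℂ := (symPoly n x₁).eval ζ with hA1def
    set A₂ : ℂ := (symPoly n x₂).eval ζ with hA2def
    have hA1 : (starRingEnd ℂ) A₁ * ζ ^ (2 * n - 1) = A₁ := symPoly_palindrome hn x₁ hζu
    have hA2 : (starRingEnd ℂ) A₂ * ζ ^ (2 * n - 1) = A₂ := symPoly_palindrome hn x₂ hζu
    set z₁ := (dft (4 * n - 1)).mulVec (symmetrizeZ' n x₁) k with hz1def
    set z₂ := (dft (4 * n - 1)).mulVec (symmetrizeZ' n x₂) k with hz2def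
    have hz1 : z₁ = c * (ζ ^ n * A₁) := by
      rw [hz1def, dft_mulVec_symmetrizeZ' hn x₁ k, hpow k]
    have hz2 : z₂ = c * (ζ ^ n * A₂) := by
      rw [hz2def, dft_mulVec_symmetrizeZ' hn x₂ k, hpow k]
    have hz : z₁ * (starRingEnd ℂ) z₁ = z₂ * (starRingEnd ℂ) z₂ := by
      rw [← habs z₁, ← habs z₂]
      exact_mod_cast h k
    have expand : ∀ z A : ℂ, z = c * (ζ ^ n * A) →
        z * (starRingEnd ℂ) z = M⁻¹ * (A * (starRingEnd ℂ) A) := by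
      intro z A hzA
      have h1 : (starRingEnd ℂ) ζ ^ n * ζ ^ n = 1 := by rw [← mul_pow, hζu, one_pow]
      rw [hzA, map_mul, map_mul, hcc, map_pow]
      calc c * (ζ ^ n * A) * (c * ((starRingEnd ℂ) ζ ^ n * (starRingEnd ℂ) A))
          = (c * c) * ((starRingEnd ℂ) ζ ^ n * ζ ^ n) * (A * (starRingEnd ℂ) A) := by ring
        _ = M⁻¹ * (A * (starRingEnd ℂ) A) := by rw [h1, hc2, mul_one]
    have hAA : A₁ * (starRingEnd ℂ) A₁ = A₂ * (starRingEnd ℂ) A₂ := by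
      have := hz
      rw [expand z₁ A₁ hz1, expand z₂ A₂ hz2] at this
      exact mul_left_cancel₀ (inv_ne_zero hM0) this
    calc A₁ ^ 2 = (A₁ * (starRingEnd ℂ) A₁) * ζ ^ (2 * n - 1) := by
          rw [mul_assoc, hA1, sq]
      _ = (A₂ * (starRingEnd ℂ) A₂) * ζ ^ (2 * n - 1) := by rw [hAA]
      _ = A₂ ^ 2 := by rw [mul_assoc, hA2, sq]
  have hQ : (symPoly n x₁ - symPoly n x₂) * (symPoly n x₁ + symPoly n x₂) = 0 := by
    have hinj : Function.Injective (fun k : Fin (4 * n - 1) => ω ^ (k : ℕ)) := by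
      intro a b hab
      exact Fin.ext (hprim.pow_inj a.isLt b.isLt hab)
    apply Polynomial.eq_zero_of_natDegree_lt_card_of_eval_eq_zero _ hinj
    · intro k
      simp only [eval_mul, eval_sub, eval_add]
      linear_combination key k
    · have d1 := symPoly_natDegree hn x₁
      have d2 := symPoly_natDegree hn x₂
      have hsub : (symPoly n x₁ - symPoly n x₂).natDegree ≤ 2 * n - 1 :=
        le_trans (Polynomial.natDegree_sub_le _ _) (by omega)
      have hadd : (symPoly n x₁ + symPoly n x₂).natDegree ≤ 2 * n - 1 :=
        le_trans (Polynomial.natDegree_add_le _ _) (by omega)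
      have := Polynomial.natDegree_mul_le (p := symPoly n x₁ - symPoly n x₂)
        (q := symPoly n x₁ + symPoly n x₂)
      rw [Fintype.card_fin]
      omega
  rcases mul_eq_zero.mp hQ with h0 | h0
  · left
    have hP : symPoly n x₁ = symPoly n x₂ := sub_eq_zero.mp h0
    funext j
    rw [← symPoly_coeff x₁ j, ← symPoly_coeff x₂ j, hP]
  · right
    have hP : symPoly n x₁ = -symPoly n x₂ := eq_neg_of_add_eq_zero_left h0
    funext j
    rw [Pi.neg_apply, ← symPoly_coeff x₁ j, ← symPoly_coeff x₂ j, hP, Polynomial.coeff_neg]
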